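/- Let S be a semigroup, 𝒦 a filter on S such that 𝒦̄ = {p ∈ βS : 𝒦 ⊆ p} is a compact subsemigroup of βS, and A ⊆ S. Then A is a member of some idempotent in 𝒦̄ if and only if there exist a dynamical system (X,⟨T_s⟩_{s∈S}), points x, y ∈ X, and a neighbourhood U of y such that the pair (x,y) is jointly 𝒦-recurrent and A = {s ∈ S : T_s(x) ∈ U}. -/
import Mathlib


open Filter Topology

attribute [local instance] Ultrafilter.mul Ultrafilter.semigroup

universe u

/-- `T_p(x) = p`-`lim_(s ∈ S) T_s(x)`. -/
noncomputable def TPmul {M : Type*} {X : Type*} [TopologicalSpace X]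
    (Ts : M → X → X) (p : Ultrafilter M) (x : X) : X :=
  (p.map fun s => Ts s x).lim

open Classical in
/-- The indicator point of `A` in `Bool ^ (S¹)`. -/
noncomputable def ptX {S : Type u} (A : Set S) : WithOne S → Bool :=
  fun t => decide (∃ a ∈ A, t = (a : WithOne S))

open Classical in
/-- The `p`-limit point of the orbit of `ptX A`. -/
noncomputable def ptY {S : Type u} [Semigroup S] (A : Set S) (p : Ultrafilter S) :
    WithOne S → Bool :=
  fun t => decide ({s : S | ∃ a ∈ A, t * (s : WithOne S) = (a : WithOne S)} ∈ p)

open Classical in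
theorem ptX_tendsto {S : Type u} [Semigroup S] (A : Set S) (p : Ultrafilter S) :
    Tendsto (fun s : S => (fun t => ptX A (t * (s : WithOne S)))) p (𝓝 (ptY A p)) := by
  rw [tendsto_pi_nhds]
  intro t
  have h : ∀ᶠ (s : S) in (p : Filter S), ptX A (t * (s : WithOne S)) = ptY A p t := by
    by_cases h : {s : S | ∃ a ∈ A, t * (s : WithOne S) = (a : WithOne S)} ∈ p
    · filter_upwards [h] with s hs
      simp only [ptX, ptY, decide_eq_decide]
      exact ⟨fun _ => h, fun _ => hs⟩
    · have h' := (Ultrafilter.compl_mem_iff_notMem).mpr h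
      filter_upwards [h'] with s hs
      simp only [ptX, ptY, decide_eq_decide]
      exact ⟨fun hc => absurd hc hs, fun hc => absurd hc h⟩
  rw [tendsto_congr' h]
  exact tendsto_const_nhds

open Classical in
theorem ptY_tendsto {S : Type u} [Semigroup S] (A : Set S) (p : Ultrafilter S)
    (hpp : p * p = p) :
    Tendsto (fun s : S => (fun t => ptY A p (t * (s : WithOne S)))) p (𝓝 (ptY A p)) := by
  rw [tendsto_pi_nhds]
  intro t
  set B : Set S := {v : S | ∃ a ∈ A, t * (v : WithOne S) = (a : WithOne S)} with hB
  have hrw : ∀ s : S, ptY A p (t * (s : WithOne S)) = decide ({u : S | s * u ∈ B} ∈ p) := by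
    intro s
    simp only [ptY, decide_eq_decide]
    constructor
    · intro hc
      refine p.toFilter.mem_of_superset hc ?_
      intro u ⟨a, ha, hu⟩
      exact ⟨a, ha, by rw [WithOne.coe_mul, ← mul_assoc]; exact hu⟩
    · intro hc
      refine p.toFilter.mem_of_superset hc ?_
      intro u ⟨a, ha, hu⟩
      exact ⟨a, ha, by rw [mul_assoc, ← WithOne.coe_mul]; exact hu⟩
  have h : ∀ᶠ (s : S) in (p : Filter S), ptY A p (t * (s : WithOne S)) = ptY A p t := by
    by_cases hBp : B ∈ p
    · have : ∀ᶠ a in (p : Filter S), ∀ᶠ b in (p : Filter S), a * b ∈ B := by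
        rw [← Ultrafilter.eventually_mul, hpp]
        exact hBp
      filter_upwards [this] with s hs
      rw [hrw s]
      simp only [ptY, decide_eq_decide]
      exact ⟨fun _ => hBp, fun _ => hs⟩
    · have hBc : Bᶜ ∈ p := (Ultrafilter.compl_mem_iff_notMem).mpr hBp
      have : ∀ᶠ a in (p : Filter S), ∀ᶠ b in (p : Filter S), a * b ∈ Bᶜ := by
        rw [← Ultrafilter.eventually_mul, hpp]
        exact hBc
      filter_upwards [this] with s hs
      rw [hrw s]
      simp only [ptY, decide_eq_decide]
      constructor
      · intro hc
        exfalso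
        have : {u : S | s * u ∈ B} ∩ {u : S | s * u ∈ Bᶜ} ∈ p := p.toFilter.inter_mem hc hs
        obtain ⟨u, hu1, hu2⟩ := p.toFilter.nonempty_of_mem this
        exact hu2 hu1
      · intro hc; exact absurd hc hBp
  rw [tendsto_congr' h]
  exact tendsto_const_nhds

/-- Dynamical characterization of members of idempotents in `𝒦̄` via joint
`𝒦`-recurrence. -/
theorem mem_idempotent_iff_jointly_K_recurrent {S : Type u} [Semigroup S]
    (𝒦 : Filter S) [𝒦.NeBot]
    (hne : {p : Ultrafilter S | (p : Filter S) ≤ 𝒦}.Nonempty)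
    (hcomp : IsCompact {p : Ultrafilter S | (p : Filter S) ≤ 𝒦})
    (hmul : ∀ p q : Ultrafilter S, (p : Filter S) ≤ 𝒦 → (q : Filter S) ≤ 𝒦 →
      ((p * q : Ultrafilter S) : Filter S) ≤ 𝒦)
    (A : Set S) :
    (∃ p : Ultrafilter S, (p : Filter S) ≤ 𝒦 ∧ p * p = p ∧ A ∈ p) ↔
      ∃ (X : Type u) (_ : TopologicalSpace X) (_ : CompactSpace X) (_ : T2Space X)
        (Ts : S → X → X),
        (∀ s, Continuous (Ts s)) ∧ (∀ s t z, Ts s (Ts t z) = Ts (s * t) z) ∧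
        ∃ (x y : X) (U : Set X), U ∈ nhds y ∧
          (∀ V ∈ nhds y, ({s : S | Ts s x ∈ V ∧ Ts s y ∈ V})ᶜ ∉ 𝒦) ∧
          A = {s : S | Ts s x ∈ U} := by
  classical
  constructor
  · rintro ⟨p, hpK, hpp, hAp⟩
    refine ⟨WithOne S → Bool, inferInstance, inferInstance, inferInstance,
      fun s f t => f (t * (s : WithOne S)), ?_, ?_, ?_⟩
    · intro s
      exact continuous_pi fun t => continuous_apply _
    · intro s t z
      funext u
      simp only [mul_assoc, WithOne.coe_mul]
    · refine ⟨ptX A, ptY A p, {f : WithOne S → Bool | f 1 = true}, ?_, ?_, ?_⟩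
      · refine IsOpen.mem_nhds ?_ ?_
        · show IsOpen ((fun f : WithOne S → Bool => f 1) ⁻¹' {true})
          exact (continuous_apply _).isOpen_preimage _ (isOpen_discrete _)
        · show ptY A p 1 = true
          simp only [ptY, decide_eq_true_eq]
          refine p.toFilter.mem_of_superset hAp ?_
          intro s hs
          exact ⟨s, hs, by rw [one_mul]⟩
      · intro V hV hcon
        have h1 := (ptX_tendsto A p) hV
        have h2 := (ptY_tendsto A p hpp) hV
        rw [mem_map] at h1 h2
        have hmem : {s : S | (fun t => ptX A (t * (s : WithOne S))) ∈ V ∧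
            (fun t => ptY A p (t * (s : WithOne S))) ∈ V} ∈ p :=
          p.toFilter.inter_mem h1 h2
        have := hpK hcon
        obtain ⟨s, hs1, hs2⟩ := p.toFilter.nonempty_of_mem (p.toFilter.inter_mem hmem this)
        exact hs2 hs1
      · ext s
        show s ∈ A ↔ ptX A ((1 : WithOne S) * (s : WithOne S)) = true
        rw [one_mul]
        simp only [ptX, decide_eq_true_eq]
        constructor
        · intro hs; exact ⟨s, hs, rfl⟩
        · rintro ⟨a, ha, hsa⟩
          rwa [WithOne.coe_inj.mp hsa]
  · rintro ⟨X, _, _, _, Ts, hcont, hact, x, y, U, hU, hrec, hA⟩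
    set g : S → X × X := fun s => (Ts s x, Ts s y) with hg
    have hne' : (𝒦 ⊓ comap g (𝓝 (y, y))).NeBot := by
      rw [inf_neBot_iff]
      intro K hK W hW
      obtain ⟨W', hW', hWsub⟩ := mem_comap.mp hW
      obtain ⟨V1, hV1, V2, hV2, hV12⟩ := mem_nhds_prod_iff.mp hW'
      have hV : V1 ∩ V2 ∈ 𝓝 y := inter_mem hV1 hV2
      by_contra hemp
      rw [Set.not_nonempty_iff_eq_empty] at hemp
      refine hrec (V1 ∩ V2) hV (mem_of_superset hK ?_)
      intro s hsK hs
      have hsW : s ∈ W := by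
        apply hWsub
        exact hV12 ⟨hs.1.1, hs.2.2⟩
      exact Set.eq_empty_iff_forall_notMem.mp hemp s ⟨hsK, hsW⟩
    obtain ⟨p, hp⟩ := Ultrafilter.exists_le (𝒦 ⊓ comap g (𝓝 (y, y)))
    have hpK : (p : Filter S) ≤ 𝒦 := hp.trans inf_le_left
    have hpg : Tendsto g p (𝓝 (y, y)) := by
      rw [tendsto_iff_comap]; exact hp.trans inf_le_right
    have hpx : Tendsto (fun s => Ts s x) p (𝓝 y) :=
      (continuous_fst.tendsto (y, y)).comp hpg
    have hpy : Tendsto (fun s => Ts s y) p (𝓝 y) :=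
      (continuous_snd.tendsto (y, y)).comp hpg
    set C : Set (Ultrafilter S) := {q : Ultrafilter S | (q : Filter S) ≤ 𝒦 ∧
      Tendsto (fun s => Ts s x) q (𝓝 y) ∧ Tendsto (fun s => Ts s y) q (𝓝 y)} with hC
    have hpC : p ∈ C := ⟨hpK, hpx, hpy⟩
    have hCeq : C = {q : Ultrafilter S | (q : Filter S) ≤ 𝒦} ∩
        (⋂ V ∈ 𝓝 y, ({q : Ultrafilter S | (fun s => Ts s x) ⁻¹' V ∈ q} ∩
          {q : Ultrafilter S | (fun s => Ts s y) ⁻¹' V ∈ q})) := by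
      ext q
      simp only [hC, Set.mem_setOf_eq, Set.mem_inter_iff, Set.mem_iInter, tendsto_def,
        Ultrafilter.mem_coe]
      constructor
      · rintro ⟨h1, h2, h3⟩
        exact ⟨h1, fun V hV => ⟨h2 V hV, h3 V hV⟩⟩
      · rintro ⟨h1, h2⟩
        exact ⟨h1, fun V hV => (h2 V hV).1, fun V hV => (h2 V hV).2⟩
    have hCcomp : IsCompact C := by
      rw [hCeq]
      refine hcomp.inter_right ?_
      exact isClosed_biInter fun V _ =>
        (ultrafilter_isClosed_basic _).inter (ultrafilter_isClosed_basic _)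
    have hCmul : ∀ q ∈ C, ∀ r ∈ C, q * r ∈ C := by
      rintro q ⟨hqK, hqx, hqy⟩ r ⟨hrK, hrx, hry⟩
      refine ⟨hmul q r hqK hrK, ?_, ?_⟩
      · rw [tendsto_def]
        intro V hV
        obtain ⟨V', hV'sub, hV'open, hyV'⟩ := mem_nhds_iff.mp hV
        have : ∀ᶠ m in ((q * r : Ultrafilter S) : Filter S), Ts m x ∈ V := by
          rw [Ultrafilter.eventually_mul]
          have ha := hqy (hV'open.mem_nhds hyV')
          rw [mem_map] at ha
          filter_upwards [ha] with a haa
          have hb := hrx ((hcont a).continuousAt.preimage_mem_nhds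
            (hV'open.mem_nhds haa))
          rw [mem_map] at hb
          filter_upwards [hb] with b hbb
          have : Ts a (Ts b x) ∈ V' := hbb
          rw [hact a b x] at this
          exact hV'sub this
        exact this
      · rw [tendsto_def]
        intro V hV
        obtain ⟨V', hV'sub, hV'open, hyV'⟩ := mem_nhds_iff.mp hV
        have : ∀ᶠ m in ((q * r : Ultrafilter S) : Filter S), Ts m y ∈ V := by
          rw [Ultrafilter.eventually_mul]
          have ha := hqy (hV'open.mem_nhds hyV')
          rw [mem_map] at ha
          filter_upwards [ha] with a haa
          have hb := hry ((hcont a).continuousAt.preimage_mem_nhds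
            (hV'open.mem_nhds haa))
          rw [mem_map] at hb
          filter_upwards [hb] with b hbb
          have : Ts a (Ts b y) ∈ V' := hbb
          rw [hact a b y] at this
          exact hV'sub this
        exact this
    obtain ⟨m, hmC, hm⟩ := exists_idempotent_in_compact_subsemigroup
      Ultrafilter.continuous_mul_left C ⟨p, hpC⟩ hCcomp hCmul
    refine ⟨m, hmC.1, hm, ?_⟩
    have := hmC.2.1 hU
    rw [mem_map] at this
    rw [hA]
    exact this
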